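/- In the Hopf algebra A = ℤ[β][x] with coproduct Δ(xⁿ) = Σ_{i+j=n} xⁱ ⊗ xʲ and the twisted product ∇_β determined by S(x) = -x being the antipode, the antipode satisfies S(xⁿ) = (-1)ⁿ · x·(x+β)^{n-1} for all n > 0. -/

import Mathlib

noncomputable section

/-- The ring `A = ℤ[β][x]`, with `β` the inner variable and `x` the outer variable. -/
abbrev A6 : Type := Polynomial (Polynomial ℤ)

/-- The element `β` of `A = ℤ[β][x]`. -/
def β6 : A6 := Polynomial.C Polynomial.X

open scoped Classical in
/-- The twisted product `∇_β` on `A = ℤ[β][x]`, the bilinear map dual to the coproduct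
`Δ_β(x) = x⊗1 + 1⊗x + βx⊗x` on `ℤ[β]⟦x⟧`.  On monomials it is given by
`∇_β(xⁱ ⊗ xʲ) = Σ_{max(i,j) ≤ n ≤ i+j} C(n, n-j)·C(j, n-i)·β^{i+j-n}·xⁿ`
(the coefficient being the trinomial coefficient `n!/((n-j)!(n-i)!(i+j-n)!)`),
extended bilinearly. -/
def nablaB (p q : A6) : A6 :=
  p.sum fun i a =>
    q.sum fun j b =>
      ∑ n ∈ Finset.Icc (max i j) (i + j),
        Polynomial.C (a * b) * ((n.choose (n - j) * j.choose (n - i) : ℕ) : A6) *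
          β6 ^ (i + j - n) * Polynomial.X ^ n

/-- The claimed antipode values: `S(x⁰) = 1` and `S(xⁿ) = (-1)ⁿ·x·(x+β)^{n-1}` for `n > 0`. -/
def Santi : ℕ → A6
  | 0 => 1
  | n + 1 => (-1) ^ (n + 1) * (Polynomial.X * (Polynomial.X + β6) ^ n)

section AuxLemmas

open Finset PowerSeries


lemma trin (m i j : ℕ) :
    ∑ n ∈ Finset.Icc (max i j) (i + j),
        m.choose n * (n.choose (n - j) * j.choose (n - i))
      = m.choose i * m.choose j := by
  rcases Nat.lt_or_ge m j with hmj | hmj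
  · rw [Nat.choose_eq_zero_of_lt hmj, mul_zero]
    apply Finset.sum_eq_zero
    intro n hn
    have : m < n := lt_of_lt_of_le hmj (le_trans (le_max_right i j) (Finset.mem_Icc.mp hn).1)
    rw [Nat.choose_eq_zero_of_lt this, zero_mul]
  · have step : ∀ n ∈ Finset.Icc (max i j) (i + j),
        m.choose n * (n.choose (n - j) * j.choose (n - i))
          = m.choose j * ((m - j).choose (n - j) * j.choose (n - i)) := by
      intro n hn
      obtain ⟨h1, h2⟩ := Finset.mem_Icc.mp hn
      have hjn : j ≤ n := le_trans (le_max_right i j) h1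
      rcases Nat.lt_or_ge m n with hmn | hmn
      · rw [Nat.choose_eq_zero_of_lt hmn,
          Nat.choose_eq_zero_of_lt (show m - j < n - j by omega)]
        ring
      · rw [← mul_assoc, ← mul_assoc, Nat.choose_symm hjn, Nat.choose_mul (n := m) hjn]
    rw [Finset.sum_congr rfl step, ← Finset.mul_sum]
    have hI : Finset.Icc (max i j) (i + j)
        = (Finset.Icc (max i j - j) i).map (addLeftEmbedding j) := by
      rw [Finset.map_add_left_Icc]
      congr 1 <;> omega
    rw [hI, Finset.sum_map]
    have step2 : ∀ d ∈ Finset.Icc (max i j - j) i,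
        (m - j).choose (addLeftEmbedding j d - j) * j.choose (addLeftEmbedding j d - i)
          = (m - j).choose d * j.choose (i - d) := by
      intro d hd
      obtain ⟨h1, h2⟩ := Finset.mem_Icc.mp hd
      have e1 : addLeftEmbedding j d - j = d := by
        simp [addLeftEmbedding_apply]
      have e2 : addLeftEmbedding j d - i = j - (i - d) := by
        simp only [addLeftEmbedding_apply]; omega
      rw [e1, e2, Nat.choose_symm (by omega)]
    rw [Finset.sum_congr rfl step2]
    have hsub : Finset.Icc (max i j - j) i ⊆ Finset.range (i + 1) := by
      intro d hd
      simp only [Finset.mem_Icc] at hd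
      simp [Nat.lt_succ_iff, hd.2]
    rw [Finset.sum_subset hsub (by
      intro d hd hnd
      simp only [Finset.mem_range, Nat.lt_succ_iff] at hd
      simp only [Finset.mem_Icc, not_and, not_le] at hnd
      have hdm : d < max i j - j := by
        by_contra hcon
        push_neg at hcon
        exact absurd (hnd hcon) (by omega)
      have : j < i - d := by omega
      rw [Nat.choose_eq_zero_of_lt this, mul_zero])]
    have hv := Nat.add_choose_eq (m - j) j i
    rw [Finset.Nat.sum_antidiagonal_eq_sum_range_succ_mk] at hv
    rw [← hv, Nat.sub_add_cancel hmj, mul_comm]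

lemma vand2 (m k : ℕ) :
    ∑ r ∈ Finset.range (k + 1), k.choose r * m.choose (r + 1)
      = (m + k).choose (k + 1) := by
  have hv := Nat.add_choose_eq m k (k + 1)
  rw [Finset.Nat.sum_antidiagonal_eq_sum_range_succ_mk, Finset.sum_range_succ'] at hv
  rw [hv]
  have : ∀ r ∈ Finset.range (k + 1),
      m.choose (r + 1) * k.choose (k + 1 - (r + 1)) = k.choose r * m.choose (r + 1) := by
    intro r hr
    simp only [Finset.mem_range, Nat.lt_succ_iff] at hr
    rw [show k + 1 - (r + 1) = k - r by omega, Nat.choose_symm hr, mul_comm]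
  rw [Finset.sum_congr rfl this]
  simp [Nat.choose_eq_zero_of_lt (Nat.lt_succ_self k)]


lemma coeff_one_sub_pow (d j : ℕ) :
    (PowerSeries.coeff (R := ℤ) j) (((1 : ℤ⟦X⟧) - PowerSeries.X) ^ d)
      = (-1) ^ j * (d.choose j : ℤ) := by
  have h : ((1 : ℤ⟦X⟧) - PowerSeries.X) ^ d
      = PowerSeries.rescale (-1 : ℤ) (((1 : ℤ⟦X⟧) + PowerSeries.X) ^ d) := by
    rw [map_pow, map_add, map_one, PowerSeries.rescale_neg_one_X]
    ring_nf
  rw [h, PowerSeries.coeff_rescale]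
  congr 1
  have h2 : ((1 : ℤ⟦X⟧) + PowerSeries.X) ^ d
      = (((1 + Polynomial.X : Polynomial ℤ) ^ d : Polynomial ℤ) : ℤ⟦X⟧) := by
    push_cast
    simp
  rw [h2, Polynomial.coeff_coe, Polynomial.coeff_one_add_X_pow]

lemma keyInt (m n : ℕ) (hn : 0 < n) :
    (m.choose n : ℤ) + ∑ k ∈ Finset.range n,
        (-1) ^ (k + 1) * ((m + k).choose (k + 1) : ℤ) * (m.choose (n - 1 - k) : ℤ) = 0 := by
  cases m with
  | zero =>
      simp [Nat.choose_eq_zero_of_lt hn, Nat.choose_succ_self]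
  | succ M =>
      have h1 : ((PowerSeries.invOneSubPow ℤ (M + 1) : ℤ⟦X⟧ˣ) : ℤ⟦X⟧)
          * ((1 : ℤ⟦X⟧) - PowerSeries.X) ^ (M + 1) = 1 := by
        rw [← PowerSeries.invOneSubPow_inv_eq_one_sub_pow]
        exact (PowerSeries.invOneSubPow ℤ (M + 1)).val_inv
      have h2 := congrArg (PowerSeries.coeff (R := ℤ) n) h1
      rw [PowerSeries.coeff_mul, PowerSeries.coeff_one, if_neg hn.ne'] at h2
      rw [PowerSeries.invOneSubPow_val_succ_eq_mk_add_choose] at h2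
      simp only [PowerSeries.coeff_mk, coeff_one_sub_pow] at h2
      -- h2 : ∑ p ∈ antidiagonal n, (M+p.1).choose M * ((-1)^p.2 * (M+1).choose p.2) = 0
      have h3 : ∑ p ∈ Finset.HasAntidiagonal.antidiagonal n,
          (-1 : ℤ) ^ p.1 * ((M + p.1).choose p.1 : ℤ) * (((M + 1).choose p.2 : ℤ)) = 0 := by
        have key : ∀ p ∈ Finset.HasAntidiagonal.antidiagonal n,
            (-1 : ℤ) ^ p.1 * ((M + p.1).choose p.1 : ℤ) * (((M + 1).choose p.2 : ℤ))
              = (-1 : ℤ) ^ n * (((M + p.1).choose M : ℤ)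
                  * ((-1) ^ p.2 * ((M + 1).choose p.2 : ℤ))) := by
          intro p hp
          have hpn : p.1 + p.2 = n := Finset.HasAntidiagonal.mem_antidiagonal.mp hp
          have hsq : (-1 : ℤ) ^ p.2 * (-1) ^ p.2 = 1 := by
            rw [← pow_add, ← two_mul, pow_mul]
            norm_num
          have hsign : (-1 : ℤ) ^ p.1 = (-1) ^ n * (-1) ^ p.2 := by
            rw [← hpn, pow_add, mul_assoc, hsq, mul_one]
          have hch : (M + p.1).choose M = (M + p.1).choose p.1 := Nat.choose_symm_add
          rw [hch, hsign]
          ring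
        rw [Finset.sum_congr rfl key, ← Finset.mul_sum, h2, mul_zero]
      rw [Finset.Nat.sum_antidiagonal_eq_sum_range_succ_mk, Finset.sum_range_succ'] at h3
      dsimp only at h3
      have es : ∑ k ∈ Finset.range n,
            (-1 : ℤ) ^ (k + 1) * ((M + 1 + k).choose (k + 1) : ℤ) * (((M + 1).choose (n - 1 - k) : ℤ))
          = ∑ k ∈ Finset.range n,
            (-1 : ℤ) ^ (k + 1) * ((M + (k + 1)).choose (k + 1) : ℤ)
              * (((M + 1).choose (n - (k + 1)) : ℤ)) := by
        apply Finset.sum_congr rfl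
        intro k hk
        rw [show M + 1 + k = M + (k + 1) by omega, show n - 1 - k = n - (k + 1) by omega]
      have e0 : (((M + 1).choose n : ℤ))
          = (-1 : ℤ) ^ 0 * ((M + 0).choose 0 : ℤ) * (((M + 1).choose (n - 0) : ℤ)) := by
        norm_num
      rw [add_comm, es, e0]
      exact h3

end AuxLemmas

open Polynomial

/-- The evaluation transform. -/
def Th (m : ℕ) (p : A6) : Polynomial ℤ :=
  p.sum fun n a => a * Polynomial.X ^ n * (m.choose n : Polynomial ℤ)

lemma Th_zero (m : ℕ) : Th m 0 = 0 := Polynomial.sum_zero_index _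

lemma Th_add (m : ℕ) (p q : A6) : Th m (p + q) = Th m p + Th m q :=
  Polynomial.sum_add_index p q _ (by simp) (by intros; ring)

lemma Th_sum {α : Type*} (m : ℕ) (s : Finset α) (f : α → A6) :
    Th m (∑ x ∈ s, f x) = ∑ x ∈ s, Th m (f x) := by
  classical
  induction s using Finset.cons_induction with
  | empty => simp [Th_zero]
  | cons a s ha ih => rw [Finset.sum_cons, Finset.sum_cons, Th_add, ih]

lemma Th_C_mul_X_pow (m : ℕ) (c : Polynomial ℤ) (k : ℕ) :
    Th m (Polynomial.C c * Polynomial.X ^ k) = c * Polynomial.X ^ k * (m.choose k : Polynomial ℤ) := by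
  rw [Polynomial.C_mul_X_pow_eq_monomial]
  exact Polynomial.sum_monomial_index c _ (by simp)

lemma Th_C_mul (m : ℕ) (c : Polynomial ℤ) (p : A6) :
    Th m (Polynomial.C c * p) = c * Th m p := by
  induction p using Polynomial.induction_on' with
  | add p q hp hq => rw [mul_add, Th_add, Th_add, hp, hq, mul_add]
  | monomial n a =>
      rw [← Polynomial.C_mul_X_pow_eq_monomial, ← mul_assoc, ← Polynomial.C_mul,
        Th_C_mul_X_pow, Th_C_mul_X_pow]
      ring

lemma Th_one (m : ℕ) : Th m 1 = 1 := by
  have : (1 : A6) = Polynomial.C 1 * Polynomial.X ^ 0 := by simp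
  rw [this, Th_C_mul_X_pow]
  simp

lemma Th_X_pow (m k : ℕ) :
    Th m (Polynomial.X ^ k : A6) = Polynomial.X ^ k * (m.choose k : Polynomial ℤ) := by
  have : (Polynomial.X ^ k : A6) = Polynomial.C 1 * Polynomial.X ^ k := by simp
  rw [this, Th_C_mul_X_pow, one_mul]

lemma Th_nabla (m : ℕ) (p q : A6) : Th m (nablaB p q) = Th m p * Th m q := by
  rw [nablaB, Polynomial.sum_def, Th_sum]
  conv_rhs => rw [Th, Th, Polynomial.sum_def, Polynomial.sum_def, Finset.sum_mul_sum]
  apply Finset.sum_congr rfl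
  intro i hi
  rw [Polynomial.sum_def, Th_sum]
  apply Finset.sum_congr rfl
  intro j hj
  rw [Th_sum]
  have hterm : ∀ n ∈ Finset.Icc (max i j) (i + j),
      Th m (Polynomial.C (p.coeff i * q.coeff j) *
          ((n.choose (n - j) * j.choose (n - i) : ℕ) : A6) *
          β6 ^ (i + j - n) * Polynomial.X ^ n)
        = p.coeff i * q.coeff j * Polynomial.X ^ (i + j)
            * ((m.choose n * (n.choose (n - j) * j.choose (n - i)) : ℕ) : Polynomial ℤ) := by
    intro n hn
    obtain ⟨h1, h2⟩ := Finset.mem_Icc.mp hn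
    have hre : Polynomial.C (p.coeff i * q.coeff j) *
          ((n.choose (n - j) * j.choose (n - i) : ℕ) : A6) *
          β6 ^ (i + j - n) * Polynomial.X ^ n
        = Polynomial.C (p.coeff i * q.coeff j *
            ((n.choose (n - j) * j.choose (n - i) : ℕ) : Polynomial ℤ) *
            Polynomial.X ^ (i + j - n)) * Polynomial.X ^ n := by
      rw [β6, ← Polynomial.C_pow, ← Polynomial.C_eq_natCast, ← Polynomial.C_mul,
        ← Polynomial.C_mul]
    have hxp : Polynomial.X ^ (i + j - n) * Polynomial.X ^ n
        = (Polynomial.X : Polynomial ℤ) ^ (i + j) := by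
      rw [← pow_add]
      congr 1
      omega
    rw [hre, Th_C_mul_X_pow, mul_assoc (p.coeff i * q.coeff j * _), hxp]
    push_cast
    ring
  rw [Finset.sum_congr rfl hterm, ← Finset.mul_sum]
  have : ∑ n ∈ Finset.Icc (max i j) (i + j),
      ((m.choose n * (n.choose (n - j) * j.choose (n - i)) : ℕ) : Polynomial ℤ)
      = ((m.choose i * m.choose j : ℕ) : Polynomial ℤ) := by
    rw [← Nat.cast_sum]
    exact congrArg _ (trin m i j)
  rw [this]
  push_cast
  ring

lemma Th_Santi (m k : ℕ) :
    Th m (Santi (k + 1))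
      = (-1 : Polynomial ℤ) ^ (k + 1) *
          (((m + k).choose (k + 1) : Polynomial ℤ) * Polynomial.X ^ (k + 1)) := by
  have hS : Santi (k + 1) = Polynomial.C ((-1 : Polynomial ℤ) ^ (k + 1)) *
      (Polynomial.X * (Polynomial.X + β6) ^ k) := by
    rw [Santi]
    congr 1
    rw [map_pow, map_neg, map_one]
  have hexp : (Polynomial.X * (Polynomial.X + β6) ^ k : A6)
      = ∑ r ∈ Finset.range (k + 1),
          Polynomial.C ((k.choose r : Polynomial ℤ) * Polynomial.X ^ (k - r)) *
            Polynomial.X ^ (r + 1) := by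
    rw [add_pow, Finset.mul_sum]
    apply Finset.sum_congr rfl
    intro r hr
    rw [β6, map_mul, Polynomial.C_pow, Polynomial.C_eq_natCast]
    ring
  rw [hS, Th_C_mul, hexp, Th_sum]
  have hterm : ∀ r ∈ Finset.range (k + 1),
      Th m (Polynomial.C ((k.choose r : Polynomial ℤ) * Polynomial.X ^ (k - r)) *
          Polynomial.X ^ (r + 1))
        = ((k.choose r * m.choose (r + 1) : ℕ) : Polynomial ℤ) * Polynomial.X ^ (k + 1) := by
    intro r hr
    simp only [Finset.mem_range, Nat.lt_succ_iff] at hr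
    have hxx : Polynomial.X ^ (k - r) * Polynomial.X ^ (r + 1)
        = (Polynomial.X : Polynomial ℤ) ^ (k + 1) := by
      rw [← pow_add]
      congr 1
      omega
    rw [Th_C_mul_X_pow, ← hxx]
    push_cast
    ring
  rw [Finset.sum_congr rfl hterm, ← Finset.sum_mul, ← Nat.cast_sum, vand2]

lemma Th_eq_zero {p : A6} (h : ∀ m : ℕ, Th m p = 0) : p = 0 := by
  ext k : 1
  rw [Polynomial.coeff_zero]
  induction k using Nat.strong_induction_on with
  | _ k ih =>
    have hk := h k
    have hval : Th k p = p.coeff k * Polynomial.X ^ k := by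
      rw [Th, Polynomial.sum_def]
      rw [Finset.sum_eq_single k]
      · simp
      · intro b hb hbk
        rcases Nat.lt_or_ge b k with hlt | hge
        · rw [ih b hlt, zero_mul, zero_mul]
        · have : k < b := lt_of_le_of_ne hge (Ne.symm hbk)
          rw [Nat.choose_eq_zero_of_lt this, Nat.cast_zero, mul_zero]
      · intro hk'
        rw [Polynomial.notMem_support_iff.mp hk', zero_mul, zero_mul]
    rw [hval] at hk
    have := mul_eq_zero.mp hk
    rcases this with h1 | h2
    · exact h1
    · exact absurd h2 (pow_ne_zero _ Polynomial.X_ne_zero)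


/-- In the bialgebra `A = ℤ[β][x]` with coproduct `Δ(xⁿ) = Σ_{i+j=n} xⁱ ⊗ xʲ` and
twisted product `∇_β` (the dual of `Δ_β` on `ℤ[β]⟦x⟧`), the elements
`S(xⁿ) = (-1)ⁿ x(x+β)^{n-1}` satisfy the defining (convolution-inverse) property of the
antipode: `Σ_{i+j=n} ∇_β(S(xⁱ) ⊗ xʲ) = 0` for every `n > 0`. -/
theorem antipode_formula (n : ℕ) (hn : 0 < n) :
    ∑ i ∈ Finset.range (n + 1), nablaB (Santi i) (Polynomial.X ^ (n - i)) = 0 := by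
  apply Th_eq_zero
  intro m
  rw [Th_sum, Finset.sum_range_succ']
  have h0 : Th m (nablaB (Santi 0) (Polynomial.X ^ (n - 0)))
      = Polynomial.X ^ n * (m.choose n : Polynomial ℤ) := by
    rw [Th_nabla]
    show Th m (Santi 0) * _ = _
    rw [show Santi 0 = 1 from rfl, Th_one, one_mul, Nat.sub_zero, Th_X_pow]
  have hterm : ∀ k ∈ Finset.range n,
      Th m (nablaB (Santi (k + 1)) (Polynomial.X ^ (n - (k + 1))))
        = Polynomial.X ^ n *
            (((-1 : ℤ) ^ (k + 1) * ((m + k).choose (k + 1) : ℤ) *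
              (m.choose (n - 1 - k) : ℤ) : ℤ) : Polynomial ℤ) := by
    intro k hk
    simp only [Finset.mem_range] at hk
    have hnk : n - (k + 1) = n - 1 - k := by omega
    have hx : Polynomial.X ^ (k + 1) * Polynomial.X ^ (n - 1 - k)
        = (Polynomial.X : Polynomial ℤ) ^ n := by
      rw [← pow_add]
      congr 1
      omega
    rw [Th_nabla, Th_Santi, Th_X_pow, hnk, ← hx]
    push_cast
    ring
  rw [Finset.sum_congr rfl hterm, h0, ← Finset.mul_sum]
  have : ∑ k ∈ Finset.range n,
      (((-1 : ℤ) ^ (k + 1) * ((m + k).choose (k + 1) : ℤ) * (m.choose (n - 1 - k) : ℤ) : ℤ) : Polynomial ℤ)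
      = (((∑ k ∈ Finset.range n,
          (-1 : ℤ) ^ (k + 1) * ((m + k).choose (k + 1) : ℤ) * (m.choose (n - 1 - k) : ℤ)) : ℤ) : Polynomial ℤ) := by
    push_cast
    rfl
  rw [this]
  have hkey := keyInt m n hn
  have : ((m.choose n : ℤ) : Polynomial ℤ) +
      (((∑ k ∈ Finset.range n,
          (-1 : ℤ) ^ (k + 1) * ((m + k).choose (k + 1) : ℤ) * (m.choose (n - 1 - k) : ℤ)) : ℤ) : Polynomial ℤ) = 0 := by
    rw [← Int.cast_add, hkey, Int.cast_zero]
  calc Polynomial.X ^ n * _ + Polynomial.X ^ n * _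
      = Polynomial.X ^ n * (((m.choose n : ℤ) : Polynomial ℤ) +
          (((∑ k ∈ Finset.range n,
            (-1 : ℤ) ^ (k + 1) * ((m + k).choose (k + 1) : ℤ) * (m.choose (n - 1 - k) : ℤ)) : ℤ) : Polynomial ℤ)) := by
        push_cast
        ring
    _ = 0 := by rw [this, mul_zero]

end
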